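/- arXiv:2209.03445 — 3 statements merged into one kernel-verified Lean document; each statement's English description precedes it below -/
import Mathlib

section
/- Let f : (0,1] → [0,∞) be a non-increasing function. Suppose there exist a ∈ (0,1), C ∈ [0,∞) and D ∈ (1,∞) such that f(aⁿ) ≤ C + D·f(aⁿ⁻¹) for all n ∈ ℕ. Then for all t ∈ (0,1], f(t) + C/(D−1) ≤ D·(f(1) + C/(D−1))·t^(log_a D). -/
theorem stmt_0 (f : ℝ → ℝ) (a C D : ℝ)
    (hf_nonneg : ∀ t, 0 < t → t ≤ 1 → 0 ≤ f t)
    (hf_mono : ∀ s t, 0 < s → s ≤ t → t ≤ 1 → f t ≤ f s)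
    (ha : 0 < a) (ha1 : a < 1) (hC : 0 ≤ C) (hD : 1 < D)
    (hrec : ∀ n : ℕ, 1 ≤ n → f (a ^ n) ≤ C + D * f (a ^ (n - 1))) :
    ∀ t, 0 < t → t ≤ 1 →
      f t + C / (D - 1) ≤ D * (f 1 + C / (D - 1)) * t ^ (Real.log D / Real.log a) := by
  intro t ht ht1
  set K := C / (D - 1) with hK
  set c := Real.log D / Real.log a with hc
  have hDpos : (0:ℝ) < D := lt_trans one_pos hD
  have hD1 : D - 1 ≠ 0 := by linarith
  have hK0 : 0 ≤ K := div_nonneg hC (by linarith)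
  have hC' : C = K * (D - 1) := by rw [hK, div_mul_cancel₀ _ hD1]
  have hf1 : 0 ≤ f 1 + K := by
    have := hf_nonneg 1 one_pos le_rfl; linarith
  have hla : Real.log a < 0 := Real.log_neg ha ha1
  have hlD : 0 < Real.log D := Real.log_pos hD
  have hcneg : c < 0 := div_neg_of_pos_of_neg hlD hla
  have hclog : c * Real.log a = Real.log D :=
    div_mul_cancel₀ _ (ne_of_lt hla)
  have haC : a ^ c = D := by
    rw [Real.rpow_def_of_pos ha, mul_comm, hclog, Real.exp_log hDpos]
  have key : ∀ n : ℕ, f (a ^ n) + K ≤ D ^ n * (f 1 + K) := by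
    intro n
    induction n with
    | zero => simp
    | succ n ih =>
      have h1 : f (a ^ (n + 1)) ≤ C + D * f (a ^ n) := by
        have := hrec (n + 1) (by omega)
        simpa using this
      calc f (a ^ (n + 1)) + K ≤ C + D * f (a ^ n) + K := by linarith
        _ = D * (f (a ^ n) + K) := by rw [hC']; ring
        _ ≤ D * (D ^ n * (f 1 + K)) := mul_le_mul_of_nonneg_left ih hDpos.le
        _ = D ^ (n + 1) * (f 1 + K) := by ring
  have hex : ∃ n : ℕ, a ^ n ≤ t := by
    obtain ⟨m, hm⟩ := exists_pow_lt_of_lt_one ht ha1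
    exact ⟨m, hm.le⟩
  cases hN : Nat.find hex with
  | zero =>
    have hnle : a ^ 0 ≤ t := hN ▸ Nat.find_spec hex
    have ht1' : t = 1 := le_antisymm ht1 (by simpa using hnle)
    subst ht1'
    rw [Real.one_rpow]
    nlinarith [key 0]
  | succ m =>
    have hnle : a ^ (m + 1) ≤ t := hN ▸ Nat.find_spec hex
    have hft : f t ≤ f (a ^ (m + 1)) := hf_mono _ t (pow_pos ha _) hnle ht1
    have hmlt : t < a ^ m := by
      have := Nat.find_min hex (m := m) (by omega)
      push_neg at this
      exact this
    have hpow : (a ^ m : ℝ) ^ c = D ^ m := by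
      rw [← Real.rpow_natCast a m, ← Real.rpow_natCast D m,
        ← Real.rpow_mul ha.le, mul_comm, Real.rpow_mul ha.le, haC]
    have hle : (D:ℝ) ^ m ≤ t ^ c := by
      rw [← hpow]
      exact Real.rpow_le_rpow_of_nonpos ht hmlt.le hcneg.le
    have h2 : (D:ℝ) ^ m * (f 1 + K) ≤ t ^ c * (f 1 + K) :=
      mul_le_mul_of_nonneg_right hle hf1
    have h3 := key (m + 1)
    have h4 : f t + K ≤ D ^ (m + 1) * (f 1 + K) := by linarith
    calc f t + K ≤ D ^ (m + 1) * (f 1 + K) := h4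
      _ = D * (D ^ m * (f 1 + K)) := by ring
      _ ≤ D * (t ^ c * (f 1 + K)) := mul_le_mul_of_nonneg_left h2 hDpos.le
      _ = D * (f 1 + K) * t ^ c := by ring
end

section
/- Let X be a p-Banach space, 0 < p ≤ 1, with a basis having threshold function φ (defined as the least C with ‖S_A(f)‖ ≤ C‖f‖ for f ∈ Q, A ⊆ A(f,a)). Suppose φ(c) < ∞ for some c ∈ (0,1). Then φ(a) < ∞ for every a ∈ (0,1], and moreover φ(a) ≤ C·a^(−d) where C = (1 + (1−c)ᵖφ(c)ᵖ)^(1/p)·(φ(1)ᵖ + 1)^(1/p) and d = −(1/p)·log_c(1 + (1−c)ᵖφ(c)ᵖ). -/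
open ENNReal in
theorem stmt_10 (φ θ : ℝ → ℝ≥0∞) (p c : ℝ) (hp : 0 < p) (hp1 : p ≤ 1)
    (hc : 0 < c) (hc1 : c < 1)
    (hφ1 : ∀ a, 0 < a → a ≤ 1 → 1 ≤ φ a)
    (hmono : ∀ a b, 0 < a → a ≤ b → b ≤ 1 → φ b ≤ φ a)
    (hθφ : ∀ a, 0 < a → a ≤ 1 → θ a ≤ φ a)
    (hsub : ∀ a b, 0 < a → a ≤ 1 → 0 < b → b ≤ 1 →
      φ (a * b) ^ p ≤ ENNReal.ofReal ((1 - b) ^ p) * φ b ^ p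
        + φ a ^ p * (1 + ENNReal.ofReal ((1 - b) ^ p) * θ b ^ p))
    (hφc : φ c ≠ ⊤) :
    ∀ a, 0 < a → a ≤ 1 → φ a ≠ ⊤ ∧
      φ a ≤ ENNReal.ofReal
        (((1 + (1 - c) ^ p * (φ c).toReal ^ p) ^ (1 / p)
            * ((φ 1).toReal ^ p + 1) ^ (1 / p))
          * a ^ ((1 / p) * (Real.log (1 + (1 - c) ^ p * (φ c).toReal ^ p) / Real.log c))) := by
  have hc1' : c ≤ 1 := hc1.le
  have hp0 : p ≠ 0 := hp.ne'
  set E : ℝ≥0∞ := ENNReal.ofReal ((1 - c) ^ p) with hE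
  set K : ℝ≥0∞ := 1 + E * φ c ^ p with hK
  have hφ1top : φ 1 ≠ ⊤ := ne_top_of_le_ne_top hφc (hmono c 1 hc hc1' le_rfl)
  have hφcp : φ c ^ p ≠ ⊤ := ENNReal.rpow_ne_top_of_nonneg hp.le hφc
  have hφ1p : φ 1 ^ p ≠ ⊤ := ENNReal.rpow_ne_top_of_nonneg hp.le hφ1top
  have hEtop : E ≠ ⊤ := ENNReal.ofReal_ne_top
  have hKtop : K ≠ ⊤ := by
    rw [hK]
    exact ENNReal.add_ne_top.2 ⟨one_ne_top, ENNReal.mul_ne_top hEtop hφcp⟩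
  -- key iteration
  have key : ∀ n : ℕ, φ (c ^ n) ^ p + 1 ≤ K ^ n * (φ 1 ^ p + 1) := by
    intro n
    induction n with
    | zero => simp
    | succ n ih =>
      have hcn : (0:ℝ) < c ^ n := pow_pos hc n
      have hcn1 : c ^ n ≤ 1 := pow_le_one₀ hc.le hc1'
      have h2 : φ (c ^ (n+1)) ^ p ≤ E * φ c ^ p + φ (c ^ n) ^ p * K := by
        rw [pow_succ]
        refine (hsub (c ^ n) c hcn hcn1 hc hc1').trans ?_
        rw [hK]
        gcongr
        exact hθφ c hc hc1'
      calc φ (c ^ (n+1)) ^ p + 1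
          ≤ (E * φ c ^ p + φ (c ^ n) ^ p * K) + 1 := add_le_add h2 le_rfl
        _ = K * (φ (c ^ n) ^ p + 1) := by rw [hK]; ring
        _ ≤ K * (K ^ n * (φ 1 ^ p + 1)) := by gcongr
        _ = K ^ (n+1) * (φ 1 ^ p + 1) := by ring
  have hRHSfin : ∀ n : ℕ, K ^ n * (φ 1 ^ p + 1) ≠ ⊤ := fun n =>
    ENNReal.mul_ne_top (ENNReal.pow_ne_top hKtop)
      (ENNReal.add_ne_top.2 ⟨hφ1p, one_ne_top⟩)
  have hfin : ∀ n : ℕ, φ (c ^ n) ≠ ⊤ := by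
    intro n h
    have h1 : (⊤:ℝ≥0∞) ≤ K ^ n * (φ 1 ^ p + 1) := by
      refine le_trans ?_ (key n)
      rw [h, ENNReal.top_rpow_of_pos hp]
      simp
    exact hRHSfin n (top_le_iff.1 h1)
  intro a ha ha1
  set t := Real.log a / Real.log c with ht
  have hlogc : Real.log c < 0 := Real.log_neg hc hc1
  have hloga : Real.log a ≤ 0 := Real.log_nonpos ha.le ha1
  have htnn : 0 ≤ t := by
    rw [ht, div_nonneg_iff]
    exact Or.inr ⟨hloga, hlogc.le⟩
  set n := ⌈t⌉₊ with hn
  have hcn_le : c ^ n ≤ a := by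
    have h1 : (n:ℝ) * Real.log c ≤ Real.log a := by
      have h2 : t ≤ (n:ℝ) := Nat.le_ceil t
      have : (n:ℝ) * Real.log c ≤ t * Real.log c := by nlinarith
      calc (n:ℝ) * Real.log c ≤ t * Real.log c := this
        _ = Real.log a := div_mul_cancel₀ _ hlogc.ne
    calc c ^ n = Real.exp ((n:ℝ) * Real.log c) := by
          rw [← Real.log_pow, Real.exp_log (pow_pos hc n)]
      _ ≤ Real.exp (Real.log a) := Real.exp_le_exp.2 h1
      _ = a := Real.exp_log ha
  have hφa_le : φ a ≤ φ (c ^ n) := hmono (c ^ n) a (pow_pos hc n) hcn_le ha1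
  have hφa_top : φ a ≠ ⊤ := ne_top_of_le_ne_top (hfin n) hφa_le
  refine ⟨hφa_top, ?_⟩
  -- pass to real numbers
  set k : ℝ := 1 + (1 - c) ^ p * (φ c).toReal ^ p with hk
  set y : ℝ := (φ 1).toReal ^ p with hy
  have h1c : (0:ℝ) ≤ (1 - c) ^ p := Real.rpow_nonneg (by linarith) p
  have hKval : K.toReal = k := by
    rw [hK, ENNReal.toReal_add one_ne_top (ENNReal.mul_ne_top hEtop hφcp),
      ENNReal.toReal_mul, hE, ENNReal.toReal_ofReal h1c, ENNReal.toReal_one,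
      ← ENNReal.toReal_rpow, hk]
  have hk1 : (1:ℝ) ≤ k := by
    rw [hk]
    nlinarith [Real.rpow_nonneg (ENNReal.toReal_nonneg : (0:ℝ) ≤ (φ c).toReal) p]
  have hk0 : (0:ℝ) < k := by linarith
  have hy0 : (0:ℝ) ≤ y := Real.rpow_nonneg ENNReal.toReal_nonneg p
  set x : ℝ := (φ a).toReal with hx
  have hx0 : (0:ℝ) ≤ x := ENNReal.toReal_nonneg
  have hreal : x ^ p ≤ k ^ n * (y + 1) := by
    have h3 : φ a ^ p ≤ K ^ n * (φ 1 ^ p + 1) :=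
      le_trans (ENNReal.rpow_le_rpow hφa_le hp.le)
        (le_trans (le_add_of_nonneg_right zero_le_one) (key n))
    have h4 := ENNReal.toReal_mono (hRHSfin n) h3
    rw [← ENNReal.toReal_rpow] at h4
    rwa [ENNReal.toReal_mul, ENNReal.toReal_pow, hKval,
      ENNReal.toReal_add hφ1p one_ne_top, ENNReal.toReal_one,
      ← ENNReal.toReal_rpow] at h4
  -- main real estimate
  have hkn : k ^ n ≤ k ^ (t + 1) := by
    rw [← Real.rpow_natCast k n]
    exact Real.rpow_le_rpow_of_exponent_le hk1 (Nat.ceil_lt_add_one htnn).le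
  have hxp : x ≤ (k ^ (t + 1) * (y + 1)) ^ (1 / p) := by
    have h5 : x ^ p ≤ k ^ (t + 1) * (y + 1) :=
      hreal.trans (mul_le_mul_of_nonneg_right hkn (by linarith))
    have h6 := Real.rpow_le_rpow (Real.rpow_nonneg hx0 p) h5 (by positivity : (0:ℝ) ≤ 1/p)
    rwa [← Real.rpow_mul hx0, mul_one_div_cancel hp0, Real.rpow_one] at h6
  have hak : a ^ ((1/p) * (Real.log k / Real.log c)) = k ^ (t * (1/p)) := by
    rw [Real.rpow_def_of_pos ha, Real.rpow_def_of_pos hk0]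
    congr 1
    have hlc : Real.log c ≠ 0 := hlogc.ne
    have hlogat : Real.log a = t * Real.log c := (div_mul_cancel₀ _ hlc).symm
    rw [hlogat]
    field_simp
  have hfinal : x ≤ (k ^ (1/p) * (y+1) ^ (1/p)) * a ^ ((1/p) * (Real.log k / Real.log c)) := by
    calc x ≤ (k ^ (t + 1) * (y + 1)) ^ (1 / p) := hxp
      _ = k ^ ((t+1) * (1/p)) * (y+1) ^ (1/p) := by
          rw [Real.mul_rpow (by positivity) (by linarith), ← Real.rpow_mul hk0.le]
      _ = (k ^ (1/p) * (y+1) ^ (1/p)) * k ^ (t * (1/p)) := by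
          rw [add_mul, one_mul, Real.rpow_add hk0]
          ring
      _ = (k ^ (1/p) * (y+1) ^ (1/p)) * a ^ ((1/p) * (Real.log k / Real.log c)) := by
          rw [hak]
  rw [← ENNReal.ofReal_toReal hφa_top]
  exact ENNReal.ofReal_le_ofReal hfinal
end

section
/- Let f* be a norm-one continuous linear functional on a real Banach space X and let (x_n)_{n∈A} be a finite family with f*(∑_{n∈A} x_n) = ‖∑_{n∈A} x_n‖ and ‖∑_{n∈B} x_n‖ ≤ ‖∑_{n∈A} x_n‖ for all B ⊆ A. Then f*(x_n) ≥ 0 for every n ∈ A. -/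
theorem stmt_15 {X : Type*} [NormedAddCommGroup X] [NormedSpace ℝ X] [CompleteSpace X]
    (g : X →L[ℝ] ℝ) (hg : ‖g‖ = 1)
    {ι : Type*} (A : Finset ι) (x : ι → X)
    (hnorming : g (∑ n ∈ A, x n) = ‖∑ n ∈ A, x n‖)
    (h : ∀ B ⊆ A, ‖∑ n ∈ B, x n‖ ≤ ‖∑ n ∈ A, x n‖) :
    ∀ n ∈ A, 0 ≤ g (x n) := by
  classical
  intro n hn
  by_contra hneg
  push_neg at hneg
  set B := A.filter (fun m => 0 ≤ g (x m)) with hB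
  have hBA : B ⊆ A := Finset.filter_subset _ _
  have h1 : ∑ m ∈ A, g (x m) = ‖∑ m ∈ A, x m‖ := by
    rw [← map_sum]; exact hnorming
  have h2 : ∑ m ∈ B, g (x m) ≤ ‖∑ m ∈ B, x m‖ := by
    rw [← map_sum]
    calc g (∑ m ∈ B, x m) ≤ |g (∑ m ∈ B, x m)| := le_abs_self _
      _ ≤ ‖g‖ * ‖∑ m ∈ B, x m‖ := g.le_opNorm _
      _ = ‖∑ m ∈ B, x m‖ := by rw [hg, one_mul]
  have h3 : ∑ m ∈ B, g (x m) ≤ ∑ m ∈ A, g (x m) :=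
    h2.trans ((h B hBA).trans_eq h1.symm)
  have h4 : ∑ m ∈ A \ B, g (x m) < 0 := by
    apply Finset.sum_neg
    · intro m hm
      simp only [hB, Finset.mem_sdiff, Finset.mem_filter] at hm
      push_neg at hm
      exact hm.2 hm.1
    · exact ⟨n, by simp [hB, Finset.mem_sdiff, hn, not_le.mpr hneg]⟩
  have h5 : ∑ m ∈ A, g (x m) = ∑ m ∈ B, g (x m) + ∑ m ∈ A \ B, g (x m) := by
    rw [Finset.sum_sdiff_eq_sub hBA]; ring
  linarith
end
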